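/- Let C be a classical case model whose formulas use only ¬, ∧, ∨, and let C_{BD△} be its BD△ counterpart (replace every variable p by t(p), preserving the preorder). Then an argument ⟨φ,χ⟩ is classically coherent (resp. classically presumptively valid, classically conclusive) in C iff ⟨φ^t, χ^t⟩ is strongly coherent (resp. strongly presumptively valid, strongly conclusive) in C_{BD△}. -/
import Mathlib


inductive BDForm : Type
  | var : ℕ → BDForm
  | neg : BDForm → BDForm
  | and : BDForm → BDForm → BDForm
  | or : BDForm → BDForm → BDForm
  | delta : BDForm → BDForm
deriving DecidableEq

structure BDModel where
  W : Type
  vp : ℕ → W → Prop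
  vm : ℕ → W → Prop

def BDModel.sat (M : BDModel) : Bool → BDForm → M.W → Prop
  | true, .var p, w => M.vp p w
  | false, .var p, w => M.vm p w
  | b, .neg φ, w => M.sat (!b) φ w
  | true, .and φ ψ, w => M.sat true φ w ∧ M.sat true ψ w
  | false, .and φ ψ, w => M.sat false φ w ∨ M.sat false ψ w
  | true, .or φ ψ, w => M.sat true φ w ∨ M.sat true ψ w
  | false, .or φ ψ, w => M.sat false φ w ∧ M.sat false ψ w
  | true, .delta φ, w => M.sat true φ w
  | false, .delta φ, w => ¬ M.sat true φ w

/-- BD△ entailment: positive extension inclusion and reverse negative inclusion, in every model. -/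
def Entails (φ χ : BDForm) : Prop :=
  ∀ (M : BDModel) (w : M.W),
    (M.sat true φ w → M.sat true χ w) ∧ (M.sat false χ w → M.sat false φ w)

/-- the value-detecting formulas -/
def tF (φ : BDForm) : BDForm := (φ.delta).and ((φ.neg.delta).neg)
def bF (φ : BDForm) : BDForm := (φ.delta).and (φ.neg.delta)
def nF (φ : BDForm) : BDForm := ((φ.delta).neg).and ((φ.neg.delta).neg)
def fF (φ : BDForm) : BDForm := ((φ.delta).neg).and (φ.neg.delta)

def topF : BDForm := ((BDForm.var 0).delta).or (((BDForm.var 0).delta).neg)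
def botF : BDForm := topF.neg
/-- A BD△ case model: a finite set of pairwise incompatible non-trivial formulas
with a total preorder on it. -/
structure CaseModel where
  C : Finset BDForm
  pre : BDForm → BDForm → Prop
  refl : ∀ ψ ∈ C, pre ψ ψ
  trans : ∀ ψ ∈ C, ∀ χ ∈ C, ∀ τ ∈ C, pre ψ χ → pre χ τ → pre ψ τ
  total : ∀ ψ ∈ C, ∀ χ ∈ C, pre ψ χ ∨ pre χ ψ
  nontriv : ∀ ψ ∈ C, ¬ Entails ψ botF
  incomp : ∀ ψ ∈ C, ∀ χ ∈ C, ψ ≠ χ → Entails (ψ.and χ) botF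

def posCoherent (𝒞 : CaseModel) (φ χ : BDForm) : Prop :=
  ∃ ψ ∈ 𝒞.C, Entails ψ (φ.and χ.delta)

def negCoherent (𝒞 : CaseModel) (φ χ : BDForm) : Prop :=
  ∃ ψ ∈ 𝒞.C, Entails ψ (φ.and χ.neg.delta.neg)

def strCoherent (𝒞 : CaseModel) (φ χ : BDForm) : Prop :=
  ∃ ψ ∈ 𝒞.C, Entails ψ (φ.and (tF χ))

def posPresValid (𝒞 : CaseModel) (φ χ : BDForm) : Prop :=
  ∃ ψ ∈ 𝒞.C, Entails ψ (φ.and χ.delta) ∧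
    ∀ ψ' ∈ 𝒞.C, Entails ψ' φ → 𝒞.pre ψ' ψ

def negPresValid (𝒞 : CaseModel) (φ χ : BDForm) : Prop :=
  ∃ ψ ∈ 𝒞.C, Entails ψ (φ.and χ.neg.delta.neg) ∧
    ∀ ψ' ∈ 𝒞.C, Entails ψ' φ → 𝒞.pre ψ' ψ

def strPresValid (𝒞 : CaseModel) (φ χ : BDForm) : Prop :=
  ∃ ψ ∈ 𝒞.C, Entails ψ (φ.and (tF χ)) ∧
    ∀ ψ' ∈ 𝒞.C, Entails ψ' φ → 𝒞.pre ψ' ψ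

def posConclusive (𝒞 : CaseModel) (φ χ : BDForm) : Prop :=
  posCoherent 𝒞 φ χ ∧ ∀ ψ ∈ 𝒞.C, Entails ψ φ → Entails ψ (φ.and χ.delta)

def negConclusive (𝒞 : CaseModel) (φ χ : BDForm) : Prop :=
  negCoherent 𝒞 φ χ ∧ ∀ ψ ∈ 𝒞.C, Entails ψ φ → Entails ψ (φ.and χ.neg.delta.neg)

def strConclusive (𝒞 : CaseModel) (φ χ : BDForm) : Prop :=
  strCoherent 𝒞 φ χ ∧ ∀ ψ ∈ 𝒞.C, Entails ψ φ → Entails ψ (φ.and (tF χ))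
/-- φ contains no occurrence of △ -/
def noDelta : BDForm → Prop
  | .var _ => True
  | .neg φ => noDelta φ
  | .and φ χ => noDelta φ ∧ noDelta χ
  | .or φ χ => noDelta φ ∧ noDelta χ
  | .delta _ => False

/-- classical (two-valued) valuation; on △-free formulas this is the standard one -/
def cval (v : ℕ → Bool) : BDForm → Bool
  | .var p => v p
  | .neg φ => !cval v φ
  | .and φ χ => cval v φ && cval v χ
  | .or φ χ => cval v φ || cval v χ
  | .delta φ => cval v φ

def CPLEntails (τ τ' : BDForm) : Prop :=
  ∀ v : ℕ → Bool, cval v τ = true → cval v τ' = true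

/-- replace every variable p by t(p) = △p ∧ ¬△¬p -/
def subT : BDForm → BDForm
  | .var p => tF (.var p)
  | .neg φ => (subT φ).neg
  | .and φ χ => (subT φ).and (subT χ)
  | .or φ χ => (subT φ).or (subT χ)
  | .delta φ => (subT φ).delta

/-- a classical case model: finitely many pairwise incompatible, classically satisfiable
△-free formulas, with a total preorder -/
structure ClCaseModel where
  C : Finset BDForm
  nodelta : ∀ ψ ∈ C, noDelta ψ
  satisfiable : ∀ ψ ∈ C, ∃ v, cval v ψ = true
  incomp : ∀ ψ ∈ C, ∀ χ ∈ C, ψ ≠ χ → ∀ v, ¬ (cval v ψ = true ∧ cval v χ = true)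
  pre : BDForm → BDForm → Prop
  refl : ∀ ψ ∈ C, pre ψ ψ
  trans : ∀ ψ ∈ C, ∀ χ ∈ C, ∀ τ ∈ C, pre ψ χ → pre χ τ → pre ψ τ
  total : ∀ ψ ∈ C, ∀ χ ∈ C, pre ψ χ ∨ pre χ ψ

def clCoherent (𝒟 : ClCaseModel) (φ χ : BDForm) : Prop :=
  ∃ ψ ∈ 𝒟.C, CPLEntails ψ (φ.and χ)

def clPresValid (𝒟 : ClCaseModel) (φ χ : BDForm) : Prop :=
  clCoherent 𝒟 φ χ ∧
    ∃ ψ ∈ 𝒟.C, CPLEntails ψ (φ.and χ) ∧ ∀ ψ' ∈ 𝒟.C, CPLEntails ψ' φ → 𝒟.pre ψ' ψ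

def clConclusive (𝒟 : ClCaseModel) (φ χ : BDForm) : Prop :=
  clCoherent 𝒟 φ χ ∧ ∀ ψ ∈ 𝒟.C, CPLEntails ψ φ → CPLEntails ψ (φ.and χ)

noncomputable def indVal (M : BDModel) (w : M.W) (p : ℕ) : Bool :=
  @decide (M.vp p w ∧ ¬ M.vm p w) (Classical.propDecidable _)

lemma subT_sat (M : BDModel) (w : M.W) : ∀ σ, noDelta σ →
    (M.sat true (subT σ) w ↔ cval (indVal M w) σ = true) ∧
    (M.sat false (subT σ) w ↔ cval (indVal M w) σ = false) := by
  intro σ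
  induction σ with
  | var p =>
      intro _
      have h : indVal M w p = true ↔ (M.vp p w ∧ ¬ M.vm p w) := by
        simp [indVal]
      constructor
      · simp only [subT, tF, BDModel.sat, cval]
        constructor
        · rintro ⟨h1, h2⟩; exact h.2 ⟨h1, h2⟩
        · intro hv; exact h.1 hv
      · simp only [subT, tF, BDModel.sat, cval]
        rcases Classical.em (M.vp p w ∧ ¬ M.vm p w) with hc | hc
        · have : indVal M w p = true := h.2 hc
          simp [this]; tauto
        · have : indVal M w p = false := by
            cases hh : indVal M w p
            · rfl
            · exact absurd (h.1 hh) hc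
          simp [this]; tauto
  | neg φ ih =>
      intro hnd
      obtain ⟨h1, h2⟩ := ih hnd
      constructor
      · simpa [subT, BDModel.sat, cval] using h2
      · simpa [subT, BDModel.sat, cval] using h1
  | and φ ψ ihφ ihψ =>
      intro hnd
      obtain ⟨h1, h2⟩ := ihφ hnd.1
      obtain ⟨h3, h4⟩ := ihψ hnd.2
      constructor
      · simp [subT, BDModel.sat, cval, h1, h3]
      · simp only [subT, BDModel.sat, cval]
        rw [h2, h4]
        cases cval (indVal M w) φ <;> cases cval (indVal M w) ψ <;> simp
  | or φ ψ ihφ ihψ =>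
      intro hnd
      obtain ⟨h1, h2⟩ := ihφ hnd.1
      obtain ⟨h3, h4⟩ := ihψ hnd.2
      constructor
      · simp only [subT, BDModel.sat, cval]
        rw [h1, h3]
        cases cval (indVal M w) φ <;> cases cval (indVal M w) ψ <;> simp
      · simp only [subT, BDModel.sat, cval]
        rw [h2, h4]
        cases cval (indVal M w) φ <;> cases cval (indVal M w) ψ <;> simp
  | delta φ ih => intro hnd; exact absurd hnd (by simp [noDelta])

lemma tF_sat (M : BDModel) (w : M.W) (σ : BDForm) (hnd : noDelta σ) :
    (M.sat true (tF (subT σ)) w ↔ cval (indVal M w) σ = true) ∧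
    (M.sat false (tF (subT σ)) w ↔ cval (indVal M w) σ = false) := by
  obtain ⟨h1, h2⟩ := subT_sat M w σ hnd
  constructor
  · simp only [tF, BDModel.sat, Bool.not_true, Bool.not_false]
    rw [h1, h2]
    cases cval (indVal M w) σ <;> simp
  · simp only [tF, BDModel.sat, Bool.not_true, Bool.not_false]
    rw [h1, h2]
    cases cval (indVal M w) σ <;> simp

/-- the canonical model for a classical valuation -/
def Mv (v : ℕ → Bool) : BDModel :=
  ⟨Unit, fun p _ => v p = true, fun p _ => v p = false⟩

lemma indVal_Mv (v : ℕ → Bool) : indVal (Mv v) () = v := by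
  funext p
  cases h : v p <;> simp [indVal, Mv, h]

lemma lemB (α β : BDForm) (hα : noDelta α) (hβ : noDelta β) :
    CPLEntails α β ↔ Entails (subT α) (subT β) := by
  constructor
  · intro hc M w
    obtain ⟨h1, h2⟩ := subT_sat M w α hα
    obtain ⟨h3, h4⟩ := subT_sat M w β hβ
    constructor
    · intro h; exact h3.2 (hc _ (h1.1 h))
    · intro h
      apply h2.2
      have hb := h4.1 h
      cases hh : cval (indVal M w) α
      · rfl
      · rw [hc _ hh] at hb; exact absurd hb (by simp)
  · intro he v hv
    have h := (he (Mv v) ()).1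
    obtain ⟨h1, _⟩ := subT_sat (Mv v) () α hα
    obtain ⟨h3, _⟩ := subT_sat (Mv v) () β hβ
    rw [indVal_Mv] at h1 h3
    exact h3.1 (h (h1.2 hv))

lemma lemC (α φ χ : BDForm) (hα : noDelta α) (hφ : noDelta φ) (hχ : noDelta χ) :
    CPLEntails α (φ.and χ) ↔ Entails (subT α) ((subT φ).and (tF (subT χ))) := by
  constructor
  · intro hc M w
    obtain ⟨h1, h2⟩ := subT_sat M w α hα
    obtain ⟨h3, h4⟩ := subT_sat M w φ hφ
    obtain ⟨h5, h6⟩ := tF_sat M w χ hχ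
    constructor
    · intro h
      have := hc _ (h1.1 h)
      simp only [cval, Bool.and_eq_true] at this
      exact ⟨h3.2 this.1, h5.2 this.2⟩
    · intro h
      apply h2.2
      have hb : cval (indVal M w) (φ.and χ) = false := by
        simp only [cval, Bool.and_eq_false_iff]
        rcases h with h | h
        · exact Or.inl (h4.1 h)
        · exact Or.inr (h6.1 h)
      cases hh : cval (indVal M w) α
      · rfl
      · rw [hc _ hh] at hb; exact absurd hb (by simp)
  · intro he v hv
    have h := (he (Mv v) ()).1
    obtain ⟨h1, _⟩ := subT_sat (Mv v) () α hα
    obtain ⟨h3, _⟩ := subT_sat (Mv v) () φ hφ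
    obtain ⟨h5, _⟩ := tF_sat (Mv v) () χ hχ
    rw [indVal_Mv] at h1 h3 h5
    obtain ⟨ha, hb⟩ := h (h1.2 hv)
    simp only [BDModel.sat] at *
    simp only [cval, Bool.and_eq_true]
    exact ⟨h3.1 ha, h5.1 hb⟩

/-- an argument is classically coherent (presumptively valid, conclusive)
in a classical case model iff its t-translation is strongly coherent (strongly
presumptively valid, strongly conclusive) in the BD△ counterpart. -/
theorem stmt14 (𝒟 : ClCaseModel) (φ χ : BDForm)
    (hφ : noDelta φ) (hχ : noDelta χ) (𝒞 : CaseModel)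
    (hC : 𝒞.C = 𝒟.C.image subT)
    (hpre : ∀ a ∈ 𝒟.C, ∀ b ∈ 𝒟.C, (𝒟.pre a b ↔ 𝒞.pre (subT a) (subT b))) :
    (clCoherent 𝒟 φ χ ↔ strCoherent 𝒞 (subT φ) (subT χ)) ∧
    (clPresValid 𝒟 φ χ ↔ strPresValid 𝒞 (subT φ) (subT χ)) ∧
    (clConclusive 𝒟 φ χ ↔ strConclusive 𝒞 (subT φ) (subT χ)) := by
  have key : ∀ ψ ∈ 𝒟.C, (CPLEntails ψ (φ.and χ) ↔
      Entails (subT ψ) ((subT φ).and (tF (subT χ)))) := fun ψ hψ =>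
    lemC ψ φ χ (𝒟.nodelta ψ hψ) hφ hχ
  have keyB : ∀ ψ ∈ 𝒟.C, (CPLEntails ψ φ ↔ Entails (subT ψ) (subT φ)) := fun ψ hψ =>
    lemB ψ φ (𝒟.nodelta ψ hψ) hφ
  have memC : ∀ ψ, ψ ∈ 𝒞.C ↔ ∃ ψ₀ ∈ 𝒟.C, subT ψ₀ = ψ := by
    intro ψ; rw [hC]; simp [Finset.mem_image]
  refine ⟨?_, ?_, ?_⟩
  · constructor
    · rintro ⟨ψ, hψ, hent⟩
      exact ⟨subT ψ, (memC _).2 ⟨ψ, hψ, rfl⟩, (key ψ hψ).1 hent⟩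
    · rintro ⟨ψ', hψ', hent⟩
      obtain ⟨ψ, hψ, rfl⟩ := (memC _).1 hψ'
      exact ⟨ψ, hψ, (key ψ hψ).2 hent⟩
  · constructor
    · rintro ⟨-, ψ, hψ, hent, hmax⟩
      refine ⟨subT ψ, (memC _).2 ⟨ψ, hψ, rfl⟩, (key ψ hψ).1 hent, ?_⟩
      rintro ψ' hψ' hent'
      obtain ⟨ψ₀, hψ₀, rfl⟩ := (memC _).1 hψ'
      exact (hpre _ hψ₀ _ hψ).1 (hmax ψ₀ hψ₀ ((keyB ψ₀ hψ₀).2 hent'))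
    · rintro ⟨ψ', hψ', hent, hmax⟩
      obtain ⟨ψ, hψ, rfl⟩ := (memC _).1 hψ'
      have hcl : CPLEntails ψ (φ.and χ) := (key ψ hψ).2 hent
      refine ⟨⟨ψ, hψ, hcl⟩, ψ, hψ, hcl, ?_⟩
      intro ψ₀ hψ₀ hent'
      exact (hpre _ hψ₀ _ hψ).2
        (hmax (subT ψ₀) ((memC _).2 ⟨ψ₀, hψ₀, rfl⟩) ((keyB ψ₀ hψ₀).1 hent'))
  · constructor
    · rintro ⟨⟨ψ, hψ, hent⟩, hall⟩
      refine ⟨⟨subT ψ, (memC _).2 ⟨ψ, hψ, rfl⟩, (key ψ hψ).1 hent⟩, ?_⟩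
      rintro ψ' hψ' hent'
      obtain ⟨ψ₀, hψ₀, rfl⟩ := (memC _).1 hψ'
      exact (key ψ₀ hψ₀).1 (hall ψ₀ hψ₀ ((keyB ψ₀ hψ₀).2 hent'))
    · rintro ⟨⟨ψ', hψ', hent⟩, hall⟩
      obtain ⟨ψ, hψ, rfl⟩ := (memC _).1 hψ'
      refine ⟨⟨ψ, hψ, (key ψ hψ).2 hent⟩, ?_⟩
      intro ψ₀ hψ₀ hent'
      exact (key ψ₀ hψ₀).2
        (hall (subT ψ₀) ((memC _).2 ⟨ψ₀, hψ₀, rfl⟩) ((keyB ψ₀ hψ₀).1 hent'))
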